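/- Let V be a real inner product space, f : V → ℝ convex and differentiable, θ* ∈ V, g : ℕ → V with ‖g(t)‖ ≤ σ for all t, and θ(t+1) = θ(t) - α • g(t) with α > 0. If ‖θ(t) - θ*‖ ≤ d for all t ∈ {0,…,T-1}, then (1/T) ∑_{t=0}^{T-1} (f(θ(t)) - f(θ*)) ≤ d²/(2αT) + ασ²/2 + (d/T) ∑_{t=0}^{T-1} ‖g(t) - ∇f(θ(t))‖. -/

import Mathlib

open RealInnerProductSpace

lemma grad_ineq9 {V : Type*} [NormedAddCommGroup V] [InnerProductSpace ℝ V] [CompleteSpace V]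
    (f : V → ℝ) (hconv : ConvexOn ℝ Set.univ f) (hdiff : Differentiable ℝ f)
    (x y : V) : f x + ⟪gradient f x, y - x⟫ ≤ f y := by
  have hgrad : HasGradientAt f (gradient f x) x := (hdiff x).hasGradientAt
  have hf : HasFDerivAt f (InnerProductSpace.toDual ℝ V (gradient f x)) x :=
    hasGradientAt_iff_hasFDerivAt.mp hgrad
  set L : ℝ →ᵃ[ℝ] V := AffineMap.lineMap x y with hL
  have hconv' : ConvexOn ℝ Set.univ (f ∘ L) := by
    simpa using hconv.comp_affineMap L
  have hline : HasDerivAt (fun t : ℝ => L t) (y - x) 0 := by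
    have h1 : HasDerivAt (fun t : ℝ => x + t • (y - x)) (y - x) 0 := by
      simpa using ((hasDerivAt_id (0:ℝ)).smul_const (y - x)).const_add x
    refine h1.congr_of_eventuallyEq ?_
    filter_upwards with t
    simp [hL, AffineMap.lineMap_apply]
    abel
  have hL0 : L 0 = x := by simp [hL]
  have hd0 : HasDerivAt (f ∘ L) (⟪gradient f x, y - x⟫) 0 := by
    have hf' : HasFDerivAt f (InnerProductSpace.toDual ℝ V (gradient f x)) (L 0) := by
      rw [hL0]; exact hf
    simpa [InnerProductSpace.toDual_apply_apply] using hf'.comp_hasDerivAt 0 hline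
  have hslope := hconv'.le_slope_of_hasDerivAt (Set.mem_univ (0:ℝ)) (Set.mem_univ 1)
    zero_lt_one hd0
  have hs : slope (f ∘ L) 0 1 = f y - f x := by
    simp [slope, hL, AffineMap.lineMap_apply]
  rw [hs] at hslope
  linarith

theorem stmt9 {V : Type*} [NormedAddCommGroup V] [InnerProductSpace ℝ V] [CompleteSpace V]
    (f : V → ℝ) (hconv : ConvexOn ℝ Set.univ f) (hdiff : Differentiable ℝ f)
    (θstar : V) (θ g : ℕ → V) (σ d α : ℝ) (T : ℕ)
    (hσ : 0 < σ) (hd : 0 < d) (hT : 1 ≤ T) (hα : 0 < α)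
    (hg : ∀ t, ‖g t‖ ≤ σ)
    (hrec : ∀ t, θ (t + 1) = θ t - α • g t)
    (hbound : ∀ t < T, ‖θ t - θstar‖ ≤ d) :
    (1 / (T : ℝ)) * ∑ t ∈ Finset.range T, (f (θ t) - f θstar) ≤
      d ^ 2 / (2 * α * T) + α * σ ^ 2 / 2 +
        (d / T) * ∑ t ∈ Finset.range T, ‖g t - gradient f (θ t)‖ := by
  have hTpos : (0:ℝ) < T := by exact_mod_cast Nat.lt_of_lt_of_le Nat.zero_lt_one hT
  set r : ℕ → V := fun t => θ t - θstar with hr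
  have key : ∀ t < T, f (θ t) - f θstar ≤
      (‖r t‖ ^ 2 - ‖r (t + 1)‖ ^ 2) / (2 * α) + α * σ ^ 2 / 2
        + d * ‖g t - gradient f (θ t)‖ := by
    intro t ht
    have h1 := grad_ineq9 f hconv hdiff (θ t) θstar
    have h1' : f (θ t) - f θstar ≤ ⟪gradient f (θ t), r t⟫ := by
      have : ⟪gradient f (θ t), θstar - θ t⟫ = - ⟪gradient f (θ t), r t⟫ := by
        rw [hr]; rw [← inner_neg_right]; congr 1; show θstar - θ t = -(θ t - θstar); abel
      linarith [h1, this ▸ h1]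
    have hexp : ‖r (t + 1)‖ ^ 2 = ‖r t‖ ^ 2 - 2 * α * ⟪g t, r t⟫ + α ^ 2 * ‖g t‖ ^ 2 := by
      have hrt : r (t + 1) = r t - α • g t := by
        simp only [hr, hrec t]; abel
      rw [hrt, norm_sub_sq_real, real_inner_smul_right, norm_smul]
      rw [real_inner_comm]
      simp [abs_of_pos hα, mul_pow]
      ring
    have hinner_g : ⟪g t, r t⟫ = (‖r t‖ ^ 2 - ‖r (t + 1)‖ ^ 2) / (2 * α) + α * ‖g t‖ ^ 2 / 2 := by
      rw [hexp]; field_simp; ring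
    have hsplit : ⟪gradient f (θ t), r t⟫ = ⟪g t, r t⟫ + ⟪gradient f (θ t) - g t, r t⟫ := by
      rw [← inner_add_left]; congr 1; abel
    have herr : ⟪gradient f (θ t) - g t, r t⟫ ≤ d * ‖g t - gradient f (θ t)‖ := by
      calc ⟪gradient f (θ t) - g t, r t⟫ ≤ ‖gradient f (θ t) - g t‖ * ‖r t‖ :=
            real_inner_le_norm _ _
        _ ≤ ‖gradient f (θ t) - g t‖ * d := by
            exact mul_le_mul_of_nonneg_left (hbound t ht) (norm_nonneg _)
        _ = d * ‖g t - gradient f (θ t)‖ := by rw [norm_sub_rev]; ring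
    have hgsq : α * ‖g t‖ ^ 2 / 2 ≤ α * σ ^ 2 / 2 := by
      have : ‖g t‖ ^ 2 ≤ σ ^ 2 := by
        have := hg t; nlinarith [norm_nonneg (g t)]
      nlinarith
    linarith [h1', hsplit, herr, hinner_g, hgsq]
  have hsum : ∑ t ∈ Finset.range T, (f (θ t) - f θstar) ≤
      d ^ 2 / (2 * α) + T * (α * σ ^ 2 / 2)
        + d * ∑ t ∈ Finset.range T, ‖g t - gradient f (θ t)‖ := by
    have h2 : ∑ t ∈ Finset.range T, (f (θ t) - f θstar) ≤
        ∑ t ∈ Finset.range T, ((‖r t‖ ^ 2 - ‖r (t + 1)‖ ^ 2) / (2 * α) + α * σ ^ 2 / 2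
          + d * ‖g t - gradient f (θ t)‖) := by
      apply Finset.sum_le_sum
      intro t ht
      exact key t (Finset.mem_range.mp ht)
    have h3 : ∑ t ∈ Finset.range T, ((‖r t‖ ^ 2 - ‖r (t + 1)‖ ^ 2) / (2 * α) + α * σ ^ 2 / 2
          + d * ‖g t - gradient f (θ t)‖)
        = (‖r 0‖ ^ 2 - ‖r T‖ ^ 2) / (2 * α) + T * (α * σ ^ 2 / 2)
          + d * ∑ t ∈ Finset.range T, ‖g t - gradient f (θ t)‖ := by
      rw [Finset.sum_add_distrib, Finset.sum_add_distrib, ← Finset.sum_div,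
        Finset.sum_range_sub' (fun t => ‖r t‖ ^ 2), Finset.sum_const, Finset.card_range,
        ← Finset.mul_sum]
      ring
    have h4 : (‖r 0‖ ^ 2 - ‖r T‖ ^ 2) / (2 * α) ≤ d ^ 2 / (2 * α) := by
      apply div_le_div_of_nonneg_right _ (by linarith)
      have h0 : ‖r 0‖ ≤ d := hbound 0 (Nat.lt_of_lt_of_le Nat.zero_lt_one hT)
      nlinarith [norm_nonneg (r 0), sq_nonneg (‖r T‖)]
    linarith [h2, h3 ▸ h2]
  have := mul_le_mul_of_nonneg_left hsum (le_of_lt (one_div_pos.mpr hTpos))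
  calc (1 / (T : ℝ)) * ∑ t ∈ Finset.range T, (f (θ t) - f θstar)
      ≤ (1 / (T : ℝ)) * (d ^ 2 / (2 * α) + T * (α * σ ^ 2 / 2)
        + d * ∑ t ∈ Finset.range T, ‖g t - gradient f (θ t)‖) := this
    _ = d ^ 2 / (2 * α * T) + α * σ ^ 2 / 2
        + (d / T) * ∑ t ∈ Finset.range T, ‖g t - gradient f (θ t)‖ := by
          field_simp
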